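/- Let a Max-3DM-2 instance with |A| = |B| = |C| = n and a real 0 < ε < 1 be given, and construct the associated scheduling instance. If the Max-3DM-2 instance admits a matching of size k, then the scheduling instance admits a feasible schedule of makespan at most 63n − 3k(1−ε). -/

import Mathlib

/-!  Coupled-task scheduling with compatibility constraints. -/

/-- A coupled-task `(a, L, b)`: a first sub-task of processing time `a`,
an idle period of length `L`, then a second sub-task of processing time `b`. -/
structure CTask where
  a : ℝ
  L : ℝ
  b : ℝ

namespace CTask

/-- The set of time instants occupied by the task when started at time `s`. -/
def occupied (t : CTask) (s : ℝ) : Set ℝ :=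
  Set.Ico s (s + t.a) ∪ Set.Ico (s + t.a + t.L) (s + t.a + t.L + t.b)

/-- The idle window of the task when started at time `s`. -/
def idleWindow (t : CTask) (s : ℝ) : Set ℝ :=
  Set.Ico (s + t.a) (s + t.a + t.L)

/-- The span of the task when started at time `s`. -/
def span (t : CTask) (s : ℝ) : Set ℝ :=
  Set.Ico s (s + t.a + t.L + t.b)

/-- Total duration `a + L + b` of a coupled-task. -/
def dur (t : CTask) : ℝ := t.a + t.L + t.b

/-- All three components of the task are positive. -/
def Positive (t : CTask) : Prop := 0 < t.a ∧ 0 < t.L ∧ 0 < t.b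

end CTask

/-- The stretched coupled-task with stretch factor `α`, i.e. `(α, α, α)`. -/
def stretched (α : ℝ) : CTask := ⟨α, α, α⟩

/-- A scheduling instance: a coupled-task for each index, together with a
compatibility relation.  `compat t' t` means that the compatibility graph
contains the arc `(t', t)` (so `t'` may be executed during the idle window of
`t`); an undirected edge `{t, t'}` is modelled by `compat t' t ∧ compat t t'`. -/
structure SchedInstance (ι : Type*) where
  task : ι → CTask
  compat : ι → ι → Prop

namespace SchedInstance

variable {ι : Type*}

/-- A schedule `σ` (assigning a start time to every task) is feasible if all
start times are nonnegative, occupied intervals of distinct tasks are pairwise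
disjoint, and whenever an occupied interval of `t'` meets the idle window of
`t`, the compatibility graph contains the arc (or edge) from `t'` to `t`. -/
def Feasible (I : SchedInstance ι) (σ : ι → ℝ) : Prop :=
  (∀ t, 0 ≤ σ t) ∧
  (∀ t t', t ≠ t' →
    Disjoint ((I.task t).occupied (σ t)) ((I.task t').occupied (σ t'))) ∧
  (∀ t t', t ≠ t' →
    (((I.task t').occupied (σ t')) ∩ ((I.task t).idleWindow (σ t))).Nonempty →
      I.compat t' t)

/-- Completion time of task `t` under schedule `σ`. -/
def endTime (I : SchedInstance ι) (σ : ι → ℝ) (t : ι) : ℝ :=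
  σ t + (I.task t).dur

/-- The makespan of `σ` is at most `C`. -/
def MakespanLE (I : SchedInstance ι) (σ : ι → ℝ) (C : ℝ) : Prop :=
  ∀ t, I.endTime σ t ≤ C

/-- The makespan of `σ` is exactly `C`. -/
def MakespanEq (I : SchedInstance ι) (σ : ι → ℝ) (C : ℝ) : Prop :=
  I.MakespanLE σ C ∧ ∃ t, I.endTime σ t = C

end SchedInstance

/-- An instance of Max-3DM-2: pairwise disjoint finite sets `A`, `B`, `C` of
equal cardinality and a set `T ⊆ A × B × C` of triples such that every element
of `A ∪ B ∪ C` occurs in exactly two triples of `T`. -/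
structure Max3DM2 (U : Type*) [DecidableEq U] where
  A : Finset U
  B : Finset U
  C : Finset U
  T : Finset (U × U × U)
  disjAB : Disjoint A B
  disjAC : Disjoint A C
  disjBC : Disjoint B C
  cardB : B.card = A.card
  cardC : C.card = A.card
  memT : ∀ t ∈ T, t.1 ∈ A ∧ t.2.1 ∈ B ∧ t.2.2 ∈ C
  occ2 : ∀ x ∈ A ∪ B ∪ C,
    (T.filter fun t => t.1 = x ∨ t.2.1 = x ∨ t.2.2 = x).card = 2

namespace Max3DM2

variable {U : Type*} [DecidableEq U]

/-- Task indices of the associated scheduling instance: an item task for each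
element of `A ∪ B ∪ C` (left), an item task `t'ᵢ` for each triple (middle),
and a box task `tᵢ` for each triple (right). -/
abbrev Idx (P : Max3DM2 U) : Type _ :=
  {x // x ∈ P.A ∪ P.B ∪ P.C} ⊕ ({t // t ∈ P.T} ⊕ {t // t ∈ P.T})

/-- The scheduling instance associated with a Max-3DM-2 instance and `ε`:
element items have stretch factor `1`, items `t'ᵢ` have stretch factor `2 + ε`,
boxes have stretch factor `9`; the compatibility graph contains exactly the
arcs `(x, tᵢ)` for each element `x` occurring in the triple `tᵢ`, and the arcs
`(t'ᵢ, tᵢ)`. -/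
def inst (P : Max3DM2 U) (ε : ℝ) : SchedInstance P.Idx where
  task := fun i => match i with
    | .inl _ => stretched 1
    | .inr (.inl _) => stretched (2 + ε)
    | .inr (.inr _) => stretched 9
  compat := fun i j => match i, j with
    | .inl x, .inr (.inr t) =>
        t.val.1 = x.val ∨ t.val.2.1 = x.val ∨ t.val.2.2 = x.val
    | .inr (.inl t'), .inr (.inr t) => t'.val = t.val
    | _, _ => False

/-- A matching: a set of pairwise disjoint triples of `T`. -/
def IsMatching (P : Max3DM2 U) (M : Finset (U × U × U)) : Prop :=
  M ⊆ P.T ∧ ∀ p ∈ M, ∀ q ∈ M, p ≠ q →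
    p.1 ≠ q.1 ∧ p.2.1 ≠ q.2.1 ∧ p.2.2 ≠ q.2.2

end Max3DM2
namespace Stmt4Aux

variable {U : Type*} [DecidableEq U]

/-- `x` occurs in the triple `t`. -/
def occurs (x : U) (t : U × U × U) : Prop := t.1 = x ∨ t.2.1 = x ∨ t.2.2 = x

variable (P : Max3DM2 U) (ε : ℝ) (M : Finset (U × U × U))

open Classical in
/-- Length of the time segment allotted to each task index. -/
noncomputable def seglen : P.Idx → ℝ
  | .inl x => if ∃ t ∈ M, occurs x.val t then 0 else 3
  | .inr (.inl t') => if t'.val ∈ M then 3 * (2 + ε) else 0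
  | .inr (.inr _) => 27

/-- A fixed enumeration of the task indices. -/
noncomputable def rk : P.Idx → Fin (Fintype.card P.Idx) := Fintype.equivFin P.Idx

/-- Start time of the segment of task `i`. -/
noncomputable def start (i : P.Idx) : ℝ :=
  ∑ j ∈ Finset.univ.filter (fun j => rk P j < rk P i), seglen P ε M j

/-- Offset of element `x` inside the box of a triple containing it. -/
def coordOff (x : U) (t : U × U × U) : ℝ :=
  if t.1 = x then 0 else if t.2.1 = x then 3 else 6

variable (hMT : M ⊆ P.T)

open Classical in
/-- The owner of each task: itself, unless it is nested in a box. -/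
noncomputable def owner : P.Idx → P.Idx
  | .inl x =>
      if h : ∃ t ∈ M, occurs x.val t then
        .inr (.inr ⟨h.choose, hMT h.choose_spec.1⟩)
      else .inl x
  | .inr (.inl t') => if t'.val ∈ M then .inr (.inl t') else .inr (.inr t')
  | .inr (.inr t) => .inr (.inr t)

open Classical in
/-- The schedule. -/
noncomputable def sched : P.Idx → ℝ
  | .inl x =>
      if h : ∃ t ∈ M, occurs x.val t then
        start P ε M (.inr (.inr ⟨h.choose, hMT h.choose_spec.1⟩)) + 9
          + coordOff x.val h.choose
      else start P ε M (.inl x)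
  | .inr (.inl t') =>
      if t'.val ∈ M then start P ε M (.inr (.inl t'))
      else start P ε M (.inr (.inr t')) + 9
  | .inr (.inr t) => start P ε M (.inr (.inr t))

end Stmt4Aux
namespace Stmt4Aux

variable {U : Type*} [DecidableEq U]

lemma mem_occ {α s y : ℝ} :
    y ∈ (stretched α).occupied s ↔
      (s ≤ y ∧ y < s + α) ∨ (s + α + α ≤ y ∧ y < s + α + α + α) := by
  simp [CTask.occupied, stretched, Set.mem_Ico]

lemma mem_idle {α s y : ℝ} :
    y ∈ (stretched α).idleWindow s ↔ s + α ≤ y ∧ y < s + α + α := by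
  simp [CTask.idleWindow, stretched, Set.mem_Ico]

lemma dur_stretched {α : ℝ} : (stretched α).dur = α + α + α := rfl

variable {t : U × U × U} {x y : U}

lemma coordOff_mem : coordOff x t = 0 ∨ coordOff x t = 3 ∨ coordOff x t = 6 := by
  unfold coordOff; split_ifs <;> simp

lemma coordOff_eq (hx : occurs x t) (hy : occurs y t)
    (h : coordOff x t = coordOff y t) : x = y := by
  unfold coordOff at h
  unfold occurs at hx hy
  split_ifs at h <;> simp_all

variable (P : Max3DM2 U) (ε : ℝ) (M : Finset (U × U × U))

lemma seglen_nonneg (hε : 0 ≤ ε) (i : P.Idx) : 0 ≤ seglen P ε M i := by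
  rcases i with x | t' | t <;> simp only [seglen]
  · split <;> norm_num
  · split <;> norm_num; linarith
  · norm_num

lemma rk_inj : Function.Injective (rk P) := (Fintype.equivFin P.Idx).injective

lemma start_nonneg (hε : 0 ≤ ε) (i : P.Idx) : 0 ≤ start P ε M i :=
  Finset.sum_nonneg fun j _ => seglen_nonneg P ε M hε j

lemma start_add_le (hε : 0 ≤ ε) {i j : P.Idx} (hij : rk P i < rk P j) :
    start P ε M i + seglen P ε M i ≤ start P ε M j := by
  classical
  have hnotmem : i ∉ Finset.univ.filter (fun l => rk P l < rk P i) := by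
    simp
  have h1 : start P ε M i + seglen P ε M i
      = ∑ l ∈ insert i (Finset.univ.filter (fun l => rk P l < rk P i)),
          seglen P ε M l := by
    rw [Finset.sum_insert hnotmem, start]; ring
  rw [h1, start]
  apply Finset.sum_le_sum_of_subset_of_nonneg
  · intro l hl
    simp only [Finset.mem_insert, Finset.mem_filter, Finset.mem_univ, true_and] at hl ⊢
    rcases hl with rfl | hl
    · exact hij
    · exact hl.trans hij
  · exact fun l _ _ => seglen_nonneg P ε M hε l

lemma start_le_total (hε : 0 ≤ ε) (i : P.Idx) :
    start P ε M i + seglen P ε M i ≤ ∑ j, seglen P ε M j := by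
  classical
  have hnotmem : i ∉ Finset.univ.filter (fun l => rk P l < rk P i) := by simp
  have h1 : start P ε M i + seglen P ε M i
      = ∑ l ∈ insert i (Finset.univ.filter (fun l => rk P l < rk P i)),
          seglen P ε M l := by
    rw [Finset.sum_insert hnotmem, start]; ring
  rw [h1]
  exact Finset.sum_le_sum_of_subset_of_nonneg (Finset.subset_univ _)
    (fun l _ _ => seglen_nonneg P ε M hε l)

end Stmt4Aux
namespace Stmt4Aux

variable {U : Type*} [DecidableEq U] (P : Max3DM2 U) (ε : ℝ) (M : Finset (U × U × U))
  (hMT : M ⊆ P.T)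

lemma owner_box (t : {t // t ∈ P.T}) :
    owner P M hMT (.inr (.inr t)) = .inr (.inr t) := rfl

lemma sched_box (t : {t // t ∈ P.T}) :
    sched P ε M hMT (.inr (.inr t)) = start P ε M (.inr (.inr t)) := rfl

lemma elt_owner (x : {x // x ∈ P.A ∪ P.B ∪ P.C}) {t : {t // t ∈ P.T}}
    (h : owner P M hMT (.inl x) = .inr (.inr t)) :
    t.val ∈ M ∧ occurs x.val t.val ∧
      sched P ε M hMT (.inl x)
        = start P ε M (.inr (.inr t)) + 9 + coordOff x.val t.val := by
  by_cases hx : ∃ u ∈ M, occurs x.val u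
  · simp only [owner, dif_pos hx, Sum.inr.injEq] at h
    have hval : hx.choose = t.val := congrArg Subtype.val h
    have hsub : (⟨hx.choose, hMT hx.choose_spec.1⟩ : {t // t ∈ P.T}) = t := h
    refine ⟨hval ▸ hx.choose_spec.1, hval ▸ hx.choose_spec.2, ?_⟩
    simp only [sched, dif_pos hx, hsub, hval]
  · simp only [owner, dif_neg hx] at h
    exact absurd h (by simp)

lemma elt_self (x : {x // x ∈ P.A ∪ P.B ∪ P.C})
    (hx : ¬ ∃ u ∈ M, occurs x.val u) :
    owner P M hMT (.inl x) = .inl x ∧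
      sched P ε M hMT (.inl x) = start P ε M (.inl x) := by
  constructor
  · simp only [owner, dif_neg hx]
  · simp only [sched, dif_neg hx]

lemma elt_matched (x : {x // x ∈ P.A ∪ P.B ∪ P.C})
    (hx : ∃ u ∈ M, occurs x.val u) :
    ∃ t : {t // t ∈ P.T}, owner P M hMT (.inl x) = .inr (.inr t) := by
  refine ⟨⟨hx.choose, hMT hx.choose_spec.1⟩, ?_⟩
  simp only [owner, dif_pos hx]

lemma item_owner (t' : {t // t ∈ P.T}) {t : {t // t ∈ P.T}}
    (h : owner P M hMT (.inr (.inl t')) = .inr (.inr t)) :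
    t'.val ∉ M ∧ t' = t ∧
      sched P ε M hMT (.inr (.inl t')) = start P ε M (.inr (.inr t)) + 9 := by
  by_cases hm : t'.val ∈ M
  · simp only [owner, if_pos hm] at h
    exact absurd h (by simp)
  · simp only [owner, if_neg hm, Sum.inr.injEq] at h
    refine ⟨hm, h, ?_⟩
    simp only [sched, if_neg hm]
    rw [h]

lemma item_self (t' : {t // t ∈ P.T}) (hm : t'.val ∈ M) :
    owner P M hMT (.inr (.inl t')) = .inr (.inl t') ∧
      sched P ε M hMT (.inr (.inl t')) = start P ε M (.inr (.inl t')) := by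
  constructor
  · simp only [owner, if_pos hm]
  · simp only [sched, if_pos hm]

lemma owner_elt_self (x : {x // x ∈ P.A ∪ P.B ∪ P.C})
    (hx : ¬ ∃ u ∈ M, occurs x.val u) :
    owner P M hMT (.inl x) = .inl x := by
  simp only [owner, dif_neg hx]

lemma owner_box_of_eq {i j : P.Idx} (h : owner P M hMT i = owner P M hMT j)
    (hne : i ≠ j) : ∃ t : {t // t ∈ P.T}, owner P M hMT i = .inr (.inr t) := by
  rcases ho : owner P M hMT i with x | t' | t
  · -- owner i = .inl x forces i = .inl x, and likewise j
    exfalso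
    have hi : i = .inl x := by
      rcases i with a | b | c
      · by_cases hx : ∃ u ∈ M, occurs a.val u
        · obtain ⟨t, ht⟩ := elt_matched P M hMT a hx
          rw [ht] at ho; exact absurd ho (by simp)
        · rw [owner_elt_self P M hMT a hx] at ho; rw [ho]
      · simp only [owner] at ho; split at ho <;> exact absurd ho (by simp)
      · exact absurd ho (by simp [owner])
    have hj : j = .inl x := by
      rw [h] at ho
      rcases j with a | b | c
      · by_cases hx : ∃ u ∈ M, occurs a.val u
        · obtain ⟨t, ht⟩ := elt_matched P M hMT a hx
          rw [ht] at ho; exact absurd ho (by simp)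
        · rw [owner_elt_self P M hMT a hx] at ho; rw [ho]
      · simp only [owner] at ho; split at ho <;> exact absurd ho (by simp)
      · exact absurd ho (by simp [owner])
    exact hne (hi.trans hj.symm)
  · exfalso
    have hi : i = .inr (.inl t') := by
      rcases i with a | b | c
      · by_cases hx : ∃ u ∈ M, occurs a.val u
        · obtain ⟨t, ht⟩ := elt_matched P M hMT a hx
          rw [ht] at ho; exact absurd ho (by simp)
        · rw [owner_elt_self P M hMT a hx] at ho; exact absurd ho (by simp)
      · simp only [owner] at ho
        split at ho
        · rw [ho]
        · exact absurd ho (by simp)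
      · exact absurd ho (by simp [owner])
    have hj : j = .inr (.inl t') := by
      rw [h] at ho
      rcases j with a | b | c
      · by_cases hx : ∃ u ∈ M, occurs a.val u
        · obtain ⟨t, ht⟩ := elt_matched P M hMT a hx
          rw [ht] at ho; exact absurd ho (by simp)
        · rw [owner_elt_self P M hMT a hx] at ho; exact absurd ho (by simp)
      · simp only [owner] at ho
        split at ho
        · rw [ho]
        · exact absurd ho (by simp)
      · exact absurd ho (by simp [owner])
    exact hne (hi.trans hj.symm)
  · exact ⟨t, rfl⟩

end Stmt4Aux
namespace Stmt4Aux

variable {U : Type*} [DecidableEq U] (P : Max3DM2 U) (ε : ℝ) (M : Finset (U × U × U))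
  (hMT : M ⊆ P.T)

lemma task_elt (x) : (P.inst ε).task (.inl x) = stretched 1 := rfl
lemma task_item (t') : (P.inst ε).task (.inr (.inl t')) = stretched (2 + ε) := rfl
lemma task_box (t) : (P.inst ε).task (.inr (.inr t)) = stretched 9 := rfl

open Classical in
lemma seglen_elt (x) : seglen P ε M (.inl x)
    = if ∃ t ∈ M, occurs x.val t then 0 else 3 := rfl

open Classical in
lemma seglen_item (t') : seglen P ε M (.inr (.inl t'))
    = if t'.val ∈ M then 3 * (2 + ε) else 0 := rfl

lemma seglen_box (t) : seglen P ε M (.inr (.inr t)) = 27 := rfl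

lemma coordOff_bounds (x : U) (t : U × U × U) :
    0 ≤ coordOff x t ∧ coordOff x t ≤ 6 := by
  rcases coordOff_mem (x := x) (t := t) with h | h | h <;> rw [h] <;> norm_num

/-- Position facts: every task sits inside its owner's segment, and nested
tasks sit inside the middle third of their owner box. -/
lemma pos_spec (hε0 : 0 < ε) (hε1 : ε < 1) (i : P.Idx) :
    start P ε M (owner P M hMT i) ≤ sched P ε M hMT i ∧
    sched P ε M hMT i + ((P.inst ε).task i).dur
      ≤ start P ε M (owner P M hMT i) + seglen P ε M (owner P M hMT i) ∧
    (owner P M hMT i ≠ i →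
      start P ε M (owner P M hMT i) + 9 ≤ sched P ε M hMT i ∧
      sched P ε M hMT i + ((P.inst ε).task i).dur
        ≤ start P ε M (owner P M hMT i) + 18) := by
  rcases i with x | t' | t
  · by_cases hx : ∃ u ∈ M, occurs x.val u
    · obtain ⟨t, ht⟩ := elt_matched P M hMT x hx
      obtain ⟨-, -, hs⟩ := elt_owner P ε M hMT x ht
      obtain ⟨hc0, hc6⟩ := coordOff_bounds x.val t.val
      rw [ht, hs, task_elt, dur_stretched, seglen_box]
      refine ⟨by linarith, by linarith, fun _ => ⟨by linarith, by linarith⟩⟩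
    · obtain ⟨ho, hs⟩ := elt_self P ε M hMT x hx
      rw [ho, hs, task_elt, dur_stretched, seglen_elt, if_neg hx]
      exact ⟨le_refl _, by norm_num, fun h => absurd rfl h⟩
  · by_cases hm : t'.val ∈ M
    · obtain ⟨ho, hs⟩ := item_self P ε M hMT t' hm
      rw [ho, hs, task_item, dur_stretched, seglen_item, if_pos hm]
      exact ⟨le_refl _, by linarith, fun h => absurd rfl h⟩
    · have ho : owner P M hMT (.inr (.inl t')) = .inr (.inr t') := by
        simp only [owner, if_neg hm]
      obtain ⟨-, -, hs⟩ := item_owner P ε M hMT t' ho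
      rw [ho, hs, task_item, dur_stretched, seglen_box]
      refine ⟨by linarith, by linarith, fun _ => ⟨by linarith, by linarith⟩⟩
  · rw [owner_box, sched_box, task_box, dur_stretched, seglen_box]
    exact ⟨le_refl _, by norm_num, fun h => absurd rfl h⟩

end Stmt4Aux
namespace Stmt4Aux

variable {U : Type*} [DecidableEq U] (P : Max3DM2 U) (ε : ℝ) (M : Finset (U × U × U))

lemma card_T_le : P.T.card ≤ 2 * P.A.card := by
  classical
  have h1 : P.T.card = ∑ x ∈ P.A, (P.T.filter fun t => t.1 = x).card :=
    Finset.card_eq_sum_card_fiberwise fun t ht => (P.memT t ht).1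
  have h2 : ∀ x ∈ P.A, (P.T.filter fun t => t.1 = x).card ≤ 2 := by
    intro x hx
    have hx' : x ∈ P.A ∪ P.B ∪ P.C := by
      simp [Finset.mem_union, hx]
    have := P.occ2 x hx'
    calc (P.T.filter fun t => t.1 = x).card
        ≤ (P.T.filter fun t => t.1 = x ∨ t.2.1 = x ∨ t.2.2 = x).card := by
          apply Finset.card_le_card
          intro t ht
          simp only [Finset.mem_filter] at ht ⊢
          exact ⟨ht.1, Or.inl ht.2⟩
      _ = 2 := this
  calc P.T.card = ∑ x ∈ P.A, (P.T.filter fun t => t.1 = x).card := h1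
    _ ≤ ∑ _x ∈ P.A, 2 := Finset.sum_le_sum h2
    _ = 2 * P.A.card := by rw [Finset.sum_const]; ring

lemma card_elts : (P.A ∪ P.B ∪ P.C).card = 3 * P.A.card := by
  rw [Finset.card_union_of_disjoint
      (Finset.disjoint_union_left.mpr ⟨P.disjAC, P.disjBC⟩),
    Finset.card_union_of_disjoint P.disjAB, P.cardB, P.cardC]
  ring

open Classical in
lemma card_matched_ge (hMT : M ⊆ P.T)
    (hd : ∀ p ∈ M, ∀ q ∈ M, p ≠ q → p.1 ≠ q.1 ∧ p.2.1 ≠ q.2.1 ∧ p.2.2 ≠ q.2.2) :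
    3 * M.card
      ≤ ((P.A ∪ P.B ∪ P.C).filter fun x => ∃ t ∈ M, occurs x t).card := by
  classical
  set F := (M.image fun t => t.1) ∪ (M.image fun t => t.2.1)
      ∪ (M.image fun t => t.2.2) with hF
  have hsubA : (M.image fun t => t.1) ⊆ P.A := by
    intro x hx
    obtain ⟨t, ht, rfl⟩ := Finset.mem_image.1 hx
    exact (P.memT t (hMT ht)).1
  have hsubB : (M.image fun t => t.2.1) ⊆ P.B := by
    intro x hx
    obtain ⟨t, ht, rfl⟩ := Finset.mem_image.1 hx
    exact (P.memT t (hMT ht)).2.1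
  have hsubC : (M.image fun t => t.2.2) ⊆ P.C := by
    intro x hx
    obtain ⟨t, ht, rfl⟩ := Finset.mem_image.1 hx
    exact (P.memT t (hMT ht)).2.2
  have hcard : F.card = 3 * M.card := by
    rw [hF, Finset.card_union_of_disjoint, Finset.card_union_of_disjoint]
    · rw [Finset.card_image_of_injOn, Finset.card_image_of_injOn,
        Finset.card_image_of_injOn]
      · ring
      · intro p hp q hq hpq
        by_contra hne
        exact (hd p hp q hq hne).2.2 hpq
      · intro p hp q hq hpq
        by_contra hne
        exact (hd p hp q hq hne).2.1 hpq
      · intro p hp q hq hpq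
        by_contra hne
        exact (hd p hp q hq hne).1 hpq
    · exact Finset.disjoint_of_subset_left hsubA
        (Finset.disjoint_of_subset_right hsubB P.disjAB)
    · exact Finset.disjoint_union_left.mpr
        ⟨Finset.disjoint_of_subset_left hsubA
          (Finset.disjoint_of_subset_right hsubC P.disjAC),
         Finset.disjoint_of_subset_left hsubB
          (Finset.disjoint_of_subset_right hsubC P.disjBC)⟩
  have hsub : F ⊆ (P.A ∪ P.B ∪ P.C).filter fun x => ∃ t ∈ M, occurs x t := by
    intro x hx
    rw [Finset.mem_filter]
    rw [hF] at hx
    simp only [Finset.mem_union, Finset.mem_image] at hx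
    rcases hx with (⟨t, ht, rfl⟩ | ⟨t, ht, rfl⟩) | ⟨t, ht, rfl⟩
    · exact ⟨by simp [Finset.mem_union, hsubA (Finset.mem_image_of_mem _ ht)],
        ⟨t, ht, Or.inl rfl⟩⟩
    · exact ⟨by simp [Finset.mem_union, hsubB (Finset.mem_image_of_mem _ ht)],
        ⟨t, ht, Or.inr (Or.inl rfl)⟩⟩
    · exact ⟨by simp [Finset.mem_union, hsubC (Finset.mem_image_of_mem _ ht)],
        ⟨t, ht, Or.inr (Or.inr rfl)⟩⟩
  calc 3 * M.card = F.card := hcard.symm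
    _ ≤ _ := Finset.card_le_card hsub

end Stmt4Aux
namespace Stmt4Aux

variable {U : Type*} [DecidableEq U] (P : Max3DM2 U) (ε : ℝ) (M : Finset (U × U × U))

lemma total_le (hε0 : 0 < ε) (hε1 : ε < 1) (hMT : M ⊆ P.T)
    (hd : ∀ p ∈ M, ∀ q ∈ M, p ≠ q → p.1 ≠ q.1 ∧ p.2.1 ≠ q.2.1 ∧ p.2.2 ≠ q.2.2) :
    ∑ j, seglen P ε M j
      ≤ 63 * (P.A.card : ℝ) - 3 * (M.card : ℝ) * (1 - ε) := by
  classical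
  rw [Fintype.sum_sum_type, Fintype.sum_sum_type]
  -- the three partial sums
  have hbox : ∑ t : {t // t ∈ P.T}, seglen P ε M (.inr (.inr t))
      = 27 * (P.T.card : ℝ) := by
    simp [seglen_box, Finset.sum_const, Fintype.card_coe, mul_comm]
  have hitem : ∑ t' : {t // t ∈ P.T}, seglen P ε M (.inr (.inl t'))
      = 3 * (2 + ε) * (M.card : ℝ) := by
    have h1 : ∑ t' : {t // t ∈ P.T}, seglen P ε M (.inr (.inl t'))
        = ∑ t ∈ P.T, (if t ∈ M then 3 * (2 + ε) else 0) := by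
      rw [← Finset.sum_coe_sort P.T (fun t => if t ∈ M then 3 * (2 + ε) else 0)]
      exact Finset.sum_congr rfl fun t' _ => seglen_item P ε M t'
    rw [h1, Finset.sum_ite_mem, Finset.inter_eq_right.mpr hMT,
      Finset.sum_const, nsmul_eq_mul, mul_comm]
  have helt : ∑ x : {x // x ∈ P.A ∪ P.B ∪ P.C}, seglen P ε M (.inl x)
      ≤ 9 * (P.A.card : ℝ) - 9 * (M.card : ℝ) := by
    have h1 : ∑ x : {x // x ∈ P.A ∪ P.B ∪ P.C}, seglen P ε M (.inl x)
        = ∑ x ∈ P.A ∪ P.B ∪ P.C,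
            (if ∃ t ∈ M, occurs x t then (0:ℝ) else 3) := by
      rw [← Finset.sum_coe_sort (P.A ∪ P.B ∪ P.C)
        (fun x => if ∃ t ∈ M, occurs x t then (0:ℝ) else 3)]
      exact Finset.sum_congr rfl fun x _ => seglen_elt P ε M x
    rw [h1, Finset.sum_ite, Finset.sum_const, Finset.sum_const]
    have hsplit := Finset.card_filter_add_card_filter_not
      (s := P.A ∪ P.B ∪ P.C) (p := fun x => ∃ t ∈ M, occurs x t)
    have hge := card_matched_ge P M hMT hd
    have hE := card_elts P
    have h3 : ((P.A ∪ P.B ∪ P.C).filter fun x => ¬ ∃ t ∈ M, occurs x t).card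
        + 3 * M.card ≤ 3 * P.A.card := by omega
    have h2 : (((P.A ∪ P.B ∪ P.C).filter fun x => ¬ ∃ t ∈ M, occurs x t).card : ℝ)
        + 3 * (M.card : ℝ) ≤ 3 * (P.A.card : ℝ) := by exact_mod_cast h3
    simp only [nsmul_eq_mul, mul_zero, zero_add]
    linarith
  have hT : (P.T.card : ℝ) ≤ 2 * (P.A.card : ℝ) := by
    exact_mod_cast card_T_le P
  rw [hbox, hitem]
  have hM0 : (0:ℝ) ≤ (M.card : ℝ) := Nat.cast_nonneg _
  nlinarith [helt, hT]

end Stmt4Aux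
namespace Stmt4Aux

variable {U : Type*} [DecidableEq U] (P : Max3DM2 U) (ε : ℝ) (M : Finset (U × U × U))
  (hMT : M ⊆ P.T)

lemma coordOff_gap {x y : U} {t : U × U × U} (hx : occurs x t) (hy : occurs y t)
    (hne : x ≠ y) :
    coordOff x t + 3 ≤ coordOff y t ∨ coordOff y t + 3 ≤ coordOff x t := by
  have hc : coordOff x t ≠ coordOff y t := fun h => hne (coordOff_eq hx hy h)
  rcases coordOff_mem (x := x) (t := t) with h | h | h <;>
    rcases coordOff_mem (x := y) (t := t) with g | g | g <;>
      rw [h, g] at hc ⊢ <;> norm_num at hc <;> norm_num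

lemma occ_in_seg (hε0 : 0 < ε) (hε1 : ε < 1) (i : P.Idx) {y : ℝ}
    (hy : y ∈ ((P.inst ε).task i).occupied (sched P ε M hMT i)) :
    start P ε M (owner P M hMT i) ≤ y ∧
      y < start P ε M (owner P M hMT i) + seglen P ε M (owner P M hMT i) := by
  obtain ⟨h1, h2, -⟩ := pos_spec P ε M hMT hε0 hε1 i
  have hdy : sched P ε M hMT i ≤ y ∧
      y < sched P ε M hMT i + ((P.inst ε).task i).dur := by
    rcases i with x | t' | t
    · rw [task_elt, mem_occ] at hy
      rw [task_elt, dur_stretched]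
      rcases hy with ⟨u, v⟩ | ⟨u, v⟩ <;> exact ⟨by linarith, by linarith⟩
    · rw [task_item, mem_occ] at hy
      rw [task_item, dur_stretched]
      rcases hy with ⟨u, v⟩ | ⟨u, v⟩ <;> exact ⟨by linarith, by linarith⟩
    · rw [task_box, mem_occ] at hy
      rw [task_box, dur_stretched]
      rcases hy with ⟨u, v⟩ | ⟨u, v⟩ <;> exact ⟨by linarith, by linarith⟩
  exact ⟨h1.trans hdy.1, lt_of_lt_of_le hdy.2 h2⟩

lemma idle_in_seg (hε0 : 0 < ε) (hε1 : ε < 1) (i : P.Idx) {y : ℝ}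
    (hy : y ∈ ((P.inst ε).task i).idleWindow (sched P ε M hMT i)) :
    start P ε M (owner P M hMT i) ≤ y ∧
      y < start P ε M (owner P M hMT i) + seglen P ε M (owner P M hMT i) := by
  obtain ⟨h1, h2, -⟩ := pos_spec P ε M hMT hε0 hε1 i
  have hdy : sched P ε M hMT i ≤ y ∧
      y < sched P ε M hMT i + ((P.inst ε).task i).dur := by
    rcases i with x | t' | t
    · rw [task_elt, mem_idle] at hy
      rw [task_elt, dur_stretched]
      exact ⟨by linarith [hy.1], by linarith [hy.2]⟩
    · rw [task_item, mem_idle] at hy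
      rw [task_item, dur_stretched]
      exact ⟨by linarith [hy.1], by linarith [hy.2]⟩
    · rw [task_box, mem_idle] at hy
      rw [task_box, dur_stretched]
      exact ⟨by linarith [hy.1], by linarith [hy.2]⟩
  exact ⟨h1.trans hdy.1, lt_of_lt_of_le hdy.2 h2⟩

lemma sched_disjoint (hε0 : 0 < ε) (hε1 : ε < 1) :
    ∀ i j : P.Idx, i ≠ j →
      Disjoint (((P.inst ε).task i).occupied (sched P ε M hMT i))
        (((P.inst ε).task j).occupied (sched P ε M hMT j)) := by
  have hε : (0:ℝ) ≤ ε := le_of_lt hε0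
  intro i j hne
  rw [Set.disjoint_left]
  intro y hyi hyj
  by_cases how : owner P M hMT i = owner P M hMT j
  · obtain ⟨t, hti⟩ := owner_box_of_eq P M hMT how hne
    have htj : owner P M hMT j = .inr (.inr t) := how ▸ hti
    rcases i with x | t' | ti <;> rcases j with x2 | t2' | tj
    · -- elt, elt
      obtain ⟨hm1, ho1, hσ1⟩ := elt_owner P ε M hMT x hti
      obtain ⟨hm2, ho2, hσ2⟩ := elt_owner P ε M hMT x2 htj
      have hxne : x.val ≠ x2.val := by
        intro h
        exact hne (by rw [Subtype.ext h])
      have hgap := coordOff_gap ho1 ho2 hxne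
      rw [task_elt, mem_occ, hσ1] at hyi
      rw [task_elt, mem_occ, hσ2] at hyj
      rcases hyi with ⟨u1, u2⟩ | ⟨u1, u2⟩ <;> rcases hyj with ⟨v1, v2⟩ | ⟨v1, v2⟩ <;>
        rcases hgap with g | g <;> linarith
    · -- elt, item
      obtain ⟨hm1, -, -⟩ := elt_owner P ε M hMT x hti
      obtain ⟨hm2, heq, -⟩ := item_owner P ε M hMT t2' htj
      exact hm2 (by rw [heq]; exact hm1)
    · -- elt, box
      obtain ⟨-, -, hσ1⟩ := elt_owner P ε M hMT x hti
      obtain ⟨hc0, hc6⟩ := coordOff_bounds x.val t.val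
      rw [owner_box] at htj
      have : tj = t := by simpa using htj
      subst this
      rw [task_elt, mem_occ, hσ1] at hyi
      rw [task_box, mem_occ, sched_box] at hyj
      rcases hyi with ⟨u1, u2⟩ | ⟨u1, u2⟩ <;> rcases hyj with ⟨v1, v2⟩ | ⟨v1, v2⟩ <;>
        linarith
    · -- item, elt
      obtain ⟨hm2, -, -⟩ := elt_owner P ε M hMT x2 htj
      obtain ⟨hm1, heq, -⟩ := item_owner P ε M hMT t' hti
      exact hm1 (by rw [heq]; exact hm2)
    · -- item, item
      obtain ⟨-, heq1, -⟩ := item_owner P ε M hMT t' hti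
      obtain ⟨-, heq2, -⟩ := item_owner P ε M hMT t2' htj
      exact hne (by rw [heq1, heq2])
    · -- item, box
      obtain ⟨-, -, hσ1⟩ := item_owner P ε M hMT t' hti
      rw [owner_box] at htj
      have : tj = t := by simpa using htj
      subst this
      rw [task_item, mem_occ, hσ1] at hyi
      rw [task_box, mem_occ, sched_box] at hyj
      rcases hyi with ⟨u1, u2⟩ | ⟨u1, u2⟩ <;> rcases hyj with ⟨v1, v2⟩ | ⟨v1, v2⟩ <;>
        linarith
    · -- box, elt
      obtain ⟨-, -, hσ2⟩ := elt_owner P ε M hMT x2 htj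
      obtain ⟨hc0, hc6⟩ := coordOff_bounds x2.val t.val
      rw [owner_box] at hti
      have : ti = t := by simpa using hti
      subst this
      rw [task_box, mem_occ, sched_box] at hyi
      rw [task_elt, mem_occ, hσ2] at hyj
      rcases hyi with ⟨u1, u2⟩ | ⟨u1, u2⟩ <;> rcases hyj with ⟨v1, v2⟩ | ⟨v1, v2⟩ <;>
        linarith
    · -- box, item
      obtain ⟨-, -, hσ2⟩ := item_owner P ε M hMT t2' htj
      rw [owner_box] at hti
      have : ti = t := by simpa using hti
      subst this
      rw [task_box, mem_occ, sched_box] at hyi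
      rw [task_item, mem_occ, hσ2] at hyj
      rcases hyi with ⟨u1, u2⟩ | ⟨u1, u2⟩ <;> rcases hyj with ⟨v1, v2⟩ | ⟨v1, v2⟩ <;>
        linarith
    · -- box, box
      rw [owner_box] at hti htj
      have h1 : ti = t := by simpa using hti
      have h2 : tj = t := by simpa using htj
      exact hne (by rw [h1, h2])
  · obtain ⟨hi1, hi2⟩ := occ_in_seg P ε M hMT hε0 hε1 i hyi
    obtain ⟨hj1, hj2⟩ := occ_in_seg P ε M hMT hε0 hε1 j hyj
    have hrk : rk P (owner P M hMT i) ≠ rk P (owner P M hMT j) :=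
      fun h => how (rk_inj P h)
    rcases lt_or_gt_of_ne hrk with h | h
    · have := start_add_le P ε M hε h
      linarith
    · have := start_add_le P ε M hε h
      linarith

end Stmt4Aux
namespace Stmt4Aux

variable {U : Type*} [DecidableEq U] (P : Max3DM2 U) (ε : ℝ) (M : Finset (U × U × U))
  (hMT : M ⊆ P.T)

lemma sched_compat (hε0 : 0 < ε) (hε1 : ε < 1) :
    ∀ i j : P.Idx, i ≠ j →
      ((((P.inst ε).task j).occupied (sched P ε M hMT j)) ∩
        (((P.inst ε).task i).idleWindow (sched P ε M hMT i))).Nonempty →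
      (P.inst ε).compat j i := by
  have hε : (0:ℝ) ≤ ε := le_of_lt hε0
  intro i j hne hint
  obtain ⟨y, hyj, hyi⟩ := hint
  by_cases how : owner P M hMT i = owner P M hMT j
  · obtain ⟨t, hti⟩ := owner_box_of_eq P M hMT how hne
    have htj : owner P M hMT j = .inr (.inr t) := how ▸ hti
    rcases i with x | t' | ti
    · -- idle window of a nested element must stay empty: derive False
      exfalso
      obtain ⟨hm1, ho1, hσ1⟩ := elt_owner P ε M hMT x hti
      obtain ⟨hc0, hc6⟩ := coordOff_bounds x.val t.val
      rw [task_elt, mem_idle, hσ1] at hyi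
      rcases j with x2 | t2' | tj
      · obtain ⟨hm2, ho2, hσ2⟩ := elt_owner P ε M hMT x2 htj
        have hxne : x.val ≠ x2.val := by
          intro h
          exact hne (by rw [Subtype.ext h])
        have hgap := coordOff_gap ho1 ho2 hxne
        rw [task_elt, mem_occ, hσ2] at hyj
        rcases hyj with ⟨v1, v2⟩ | ⟨v1, v2⟩ <;> rcases hgap with g | g <;> linarith
      · obtain ⟨hm2, heq, -⟩ := item_owner P ε M hMT t2' htj
        exact hm2 (by rw [heq]; exact hm1)
      · rw [owner_box] at htj
        have : tj = t := by simpa using htj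
        subst this
        rw [task_box, mem_occ, sched_box] at hyj
        rcases hyj with ⟨v1, v2⟩ | ⟨v1, v2⟩ <;> linarith
    · -- idle window of a nested item task must stay empty: derive False
      exfalso
      obtain ⟨hm1, heq1, hσ1⟩ := item_owner P ε M hMT t' hti
      rw [task_item, mem_idle, hσ1] at hyi
      rcases j with x2 | t2' | tj
      · obtain ⟨hm2, -, -⟩ := elt_owner P ε M hMT x2 htj
        exact hm1 (by rw [heq1]; exact hm2)
      · obtain ⟨-, heq2, -⟩ := item_owner P ε M hMT t2' htj
        exact hne (by rw [heq1, heq2])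
      · rw [owner_box] at htj
        have : tj = t := by simpa using htj
        subst this
        rw [task_box, mem_occ, sched_box] at hyj
        rcases hyj with ⟨v1, v2⟩ | ⟨v1, v2⟩ <;> linarith
    · -- the box: nested tasks are compatible with it
      rw [owner_box] at hti
      have : ti = t := by simpa using hti
      subst this
      rcases j with x2 | t2' | tj
      · obtain ⟨-, ho2, -⟩ := elt_owner P ε M hMT x2 htj
        exact ho2
      · obtain ⟨-, heq2, -⟩ := item_owner P ε M hMT t2' htj
        exact congrArg Subtype.val heq2
      · rw [owner_box] at htj
        have h2 : tj = ti := by simpa using htj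
        subst h2
        exact absurd rfl hne
  · exfalso
    obtain ⟨hi1, hi2⟩ := idle_in_seg P ε M hMT hε0 hε1 i hyi
    obtain ⟨hj1, hj2⟩ := occ_in_seg P ε M hMT hε0 hε1 j hyj
    have hrk : rk P (owner P M hMT i) ≠ rk P (owner P M hMT j) :=
      fun h => how (rk_inj P h)
    rcases lt_or_gt_of_ne hrk with h | h
    · have := start_add_le P ε M hε h
      linarith
    · have := start_add_le P ε M hε h
      linarith

end Stmt4Aux
/-- if the Max-3DM-2 instance admits a matching of size `k`, then
the associated scheduling instance admits a feasible schedule of makespan at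
most `63n − 3k(1 − ε)`. -/
theorem stmt4 {U : Type*} [DecidableEq U] (P : Max3DM2 U)
    (ε : ℝ) (hε0 : 0 < ε) (hε1 : ε < 1)
    (M : Finset (U × U × U)) (hM : P.IsMatching M) (k : ℕ) (hk : M.card = k) :
    ∃ σ : P.Idx → ℝ, (P.inst ε).Feasible σ ∧
      (P.inst ε).MakespanLE σ (63 * (P.A.card : ℝ) - 3 * (k : ℝ) * (1 - ε)) := by
  classical
  obtain ⟨hMT, hMdisj⟩ := hM
  refine ⟨Stmt4Aux.sched P ε M hMT, ⟨?_, ?_, ?_⟩, ?_⟩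
  · intro i
    have h := (Stmt4Aux.pos_spec P ε M hMT hε0 hε1 i).1
    have h2 := Stmt4Aux.start_nonneg P ε M (le_of_lt hε0) (Stmt4Aux.owner P M hMT i)
    linarith
  · exact Stmt4Aux.sched_disjoint P ε M hMT hε0 hε1
  · exact fun t t' hne h => Stmt4Aux.sched_compat P ε M hMT hε0 hε1 t t' hne h
  · intro i
    have h := (Stmt4Aux.pos_spec P ε M hMT hε0 hε1 i).2.1
    have h2 := Stmt4Aux.start_le_total P ε M (le_of_lt hε0) (Stmt4Aux.owner P M hMT i)
    have h3 := Stmt4Aux.total_le P ε M hε0 hε1 hMT hMdisj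
    rw [← hk]
    unfold SchedInstance.endTime
    linarith
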